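/- For p ≥ 2 there is a constant c_p > 0, depending only on p, such that for all vectors a, b in ℝ^N one has ⟨|b|^{p−2} b − |a|^{p−2} a, b − a⟩ ≥ c_p |b − a|^p, where ⟨·,·⟩ is the standard inner product and |·| the Euclidean norm. -/

import Mathlib

theorem stmt_3 (p : ℝ) (hp : 2 ≤ p) :
    ∃ c : ℝ, 0 < c ∧ ∀ (N : ℕ), 1 ≤ N → ∀ a b : EuclideanSpace ℝ (Fin N),
      (inner ℝ ((‖b‖ ^ (p - 2)) • b - (‖a‖ ^ (p - 2)) • a) (b - a) : ℝ) ≥ c * ‖b - a‖ ^ p := by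
  have hp2 : (0:ℝ) ≤ p - 2 := by linarith
  refine ⟨(2:ℝ) ^ (1 - p), Real.rpow_pos_of_pos two_pos _, fun N _ a b => ?_⟩
  by_cases hab : b = a
  · subst hab
    simp [Real.zero_rpow (by linarith : p ≠ 0)]
  · have hd : 0 < ‖b - a‖ := by
      simpa [sub_eq_zero] using hab
    set A := ‖a‖ ^ (p - 2) with hA
    set B := ‖b‖ ^ (p - 2) with hB
    have hA0 : 0 ≤ A := Real.rpow_nonneg (norm_nonneg a) _
    have hB0 : 0 ≤ B := Real.rpow_nonneg (norm_nonneg b) _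
    -- expand the inner product
    have hexp : (inner ℝ (B • b - A • a) (b - a) : ℝ)
        = B * ‖b‖ ^ 2 + A * ‖a‖ ^ 2 - (A + B) * (inner ℝ b a : ℝ) := by
      rw [inner_sub_left, real_inner_smul_left, real_inner_smul_left,
        inner_sub_right, inner_sub_right, real_inner_self_eq_norm_sq,
        real_inner_self_eq_norm_sq, real_inner_comm a b]
      ring
    have hnorm : ‖b - a‖ ^ 2 = ‖b‖ ^ 2 - 2 * (inner ℝ b a : ℝ) + ‖a‖ ^ 2 := by
      rw [norm_sub_sq_real]
    -- key monotonicity fact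
    have hmono : 0 ≤ (B - A) * (‖b‖ ^ 2 - ‖a‖ ^ 2) := by
      rcases le_total ‖a‖ ‖b‖ with h | h
      · have h1 : A ≤ B := Real.rpow_le_rpow (norm_nonneg a) h hp2
        have h2 : ‖a‖ ^ 2 ≤ ‖b‖ ^ 2 := pow_le_pow_left₀ (norm_nonneg a) h 2
        nlinarith
      · have h1 : B ≤ A := Real.rpow_le_rpow (norm_nonneg b) h hp2
        have h2 : ‖b‖ ^ 2 ≤ ‖a‖ ^ 2 := pow_le_pow_left₀ (norm_nonneg b) h 2
        nlinarith
    have step1 : (inner ℝ (B • b - A • a) (b - a) : ℝ)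
        ≥ (1 / 2) * (A + B) * ‖b - a‖ ^ 2 := by
      rw [hexp, hnorm]; nlinarith
    -- lower bound on A + B
    have hmax : ‖b - a‖ / 2 ≤ max ‖a‖ ‖b‖ := by
      have := norm_sub_le b a
      rcases le_total ‖a‖ ‖b‖ with h | h
      · rw [max_eq_right h]; linarith
      · rw [max_eq_left h]; linarith
    have hAB : (‖b - a‖ / 2) ^ (p - 2) ≤ A + B := by
      have hmle : (‖b - a‖ / 2) ^ (p - 2) ≤ (max ‖a‖ ‖b‖) ^ (p - 2) :=
        Real.rpow_le_rpow (by positivity) hmax hp2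
      rcases le_total ‖a‖ ‖b‖ with h | h
      · rw [max_eq_right h] at hmle; linarith
      · rw [max_eq_left h] at hmle; linarith
    have step2 : (1 / 2) * (A + B) * ‖b - a‖ ^ 2
        ≥ (1 / 2) * (‖b - a‖ / 2) ^ (p - 2) * ‖b - a‖ ^ 2 := by
      have h2 : (0:ℝ) ≤ ‖b - a‖ ^ 2 := by positivity
      nlinarith
    -- compute the right-hand side
    have hcalc : (1 / 2) * (‖b - a‖ / 2) ^ (p - 2) * ‖b - a‖ ^ 2
        = (2:ℝ) ^ (1 - p) * ‖b - a‖ ^ p := by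
      rw [Real.div_rpow hd.le (by norm_num : (0:ℝ) ≤ 2)]
      have h1 : ‖b - a‖ ^ (p - 2) * ‖b - a‖ ^ 2 = ‖b - a‖ ^ p := by
        rw [← Real.rpow_natCast _ 2, ← Real.rpow_add hd]
        norm_num
      have h3 : (0:ℝ) < (2:ℝ) ^ (p - 2) := Real.rpow_pos_of_pos two_pos _
      have h2 : (2:ℝ) ^ (1 - p) * (2:ℝ) ^ (p - 2) = 1 / 2 := by
        rw [← Real.rpow_add two_pos, show (1:ℝ) - p + (p - 2) = -1 by ring,
          Real.rpow_neg_one]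
        norm_num
      have h4 : (2:ℝ) ^ (1 - p) = (1 / 2) / (2:ℝ) ^ (p - 2) := by
        rw [eq_div_iff (ne_of_gt h3)]; exact h2
      rw [h4, ← h1]
      field_simp
    rw [← hcalc]
    exact le_trans step2.le step1.le |>.ge
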